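/- Let H be a finite index subgroup of F_n, let w ∈ F_n be a visible element, and let m be the smallest positive integer with w^m ∈ H. If the cyclic group ⟨w⟩ acts transitively on the right cosets of H in F_n, then w^m is a visible element of the free group H. -/

import Mathlib

/-- `R` is a retract of the ambient group: there is an endomorphism with image `R`
restricting to the identity on `R` (equivalently, an idempotent endomorphism with image `R`). -/
def IsRetract {G : Type*} [Group G] (R : Subgroup G) : Prop :=
  ∃ r : G →* G, r.range = R ∧ ∀ x ∈ R, r x = x

/-- The subgroup `H` is free of rank `m`. -/
def HasFreeRank {G : Type*} [Group G] (H : Subgroup G) (m : ℕ) : Prop :=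
  ∃ φ : FreeGroup (Fin m) →* G, Function.Injective φ ∧ φ.range = H

/-- An element of a (finitely generated free or free abelian) group is *visible* if some
homomorphism to `ℤ` sends it to `1`; equivalently, its image in the abelianization is part
of a basis (has coprime coordinates). -/
def IsVisibleElement {G : Type*} [Group G] (g : G) : Prop :=
  ∃ f : G →* Multiplicative ℤ, f g = Multiplicative.ofAdd 1

/-- Permuting the domain gives automorphisms of `X → Multiplicative ℤ`. -/
def permAut (X : Type*) : Equiv.Perm X →* MulAut (X → Multiplicative ℤ) where
  toFun σ :=
    { toFun := fun a => a ∘ σ.symm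
      invFun := fun a => a ∘ σ
      left_inv := fun a => by ext x; simp
      right_inv := fun a => by ext x; simp
      map_mul' := fun a b => rfl }
  map_one' := by ext a x; simp; rfl
  map_mul' := fun σ τ => by ext a x; rfl

/-- Main auxiliary lemma: given a homomorphism `f : FreeGroup α →* ℤ`, a finite index
subgroup `H` such that the cyclic group generated by `w` acts transitively on the cosets,
and `m` minimal positive with `w ^ m ∈ H`, there is a homomorphism `H →* ℤ` sending
`w ^ m` to `f w`. -/
theorem exists_hom_of_transitive {α : Type*} (H : Subgroup (FreeGroup α)) [H.FiniteIndex]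
    (w : FreeGroup α) (f : FreeGroup α →* Multiplicative ℤ)
    (htrans : ∀ g : FreeGroup α, ∃ k : ℤ, g * w ^ k ∈ H)
    (m : ℕ) (hm : 0 < m) (hwm : w ^ m ∈ H)
    (hmin : ∀ j : ℕ, 0 < j → w ^ j ∈ H → m ≤ j) :
    ∃ φ : H →* Multiplicative ℤ, φ ⟨w ^ m, hwm⟩ = f w := by
  classical
  haveI : Finite (FreeGroup α ⧸ H) := Subgroup.finite_quotient_of_finiteIndex
  haveI : Fintype (FreeGroup α ⧸ H) := Fintype.ofFinite _
  set x0 : FreeGroup α ⧸ H := QuotientGroup.mk 1 with hx0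
  -- the permutation action of the free group on the cosets
  let π : FreeGroup α →* Equiv.Perm (FreeGroup α ⧸ H) :=
    MulAction.toPermHom (FreeGroup α) (FreeGroup α ⧸ H)
  let act : FreeGroup α →* MulAut ((FreeGroup α ⧸ H) → Multiplicative ℤ) :=
    (permAut (FreeGroup α ⧸ H)).comp π
  -- the crossed homomorphism packaged as a hom into a semidirect product
  let Φ : FreeGroup α →* ((FreeGroup α ⧸ H) → Multiplicative ℤ) ⋊[act] FreeGroup α :=
    FreeGroup.lift fun j =>
      ⟨fun x => if x = x0 then f (FreeGroup.of j) else 1, FreeGroup.of j⟩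
  have hright : ∀ g : FreeGroup α, (Φ g).right = g := by
    have h : (SemidirectProduct.rightHom).comp Φ = MonoidHom.id (FreeGroup α) := by
      apply FreeGroup.ext_hom
      intro a
      simp [Φ, SemidirectProduct.rightHom_eq_right]
    intro g
    have := congrArg (fun ψ => ψ g) h
    simpa [SemidirectProduct.rightHom_eq_right] using this
  set U : FreeGroup α → (FreeGroup α ⧸ H) → Multiplicative ℤ :=
    fun g => (Φ g).left with hU
  -- the cocycle identity
  have hcoc : ∀ a b : FreeGroup α, ∀ x : FreeGroup α ⧸ H,
      U (a * b) x = U a x * U b (a⁻¹ • x) := by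
    intro a b x
    have h1 : U (a * b) = U a * act (Φ a).right (U b) := by
      simp only [hU, map_mul, SemidirectProduct.mul_left]
    rw [h1, hright a]
    rfl
  have hU1 : ∀ x : FreeGroup α ⧸ H, U 1 x = 1 := by
    intro x; simp [hU, SemidirectProduct.one_left]
  -- value of U on generators
  have hUof : ∀ j, U (FreeGroup.of j) =
      fun x => if x = x0 then f (FreeGroup.of j) else 1 := by
    intro j; simp [hU, Φ]
  -- the product-over-cosets homomorphism S agrees with f
  have hSmul : ∀ a b : FreeGroup α, (∏ x : FreeGroup α ⧸ H, U (a * b) x) =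
      (∏ x : FreeGroup α ⧸ H, U a x) * (∏ x : FreeGroup α ⧸ H, U b x) := by
    intro a b
    have h1 : (∏ x : FreeGroup α ⧸ H, U (a * b) x)
        = ∏ x : FreeGroup α ⧸ H, U a x * U b (a⁻¹ • x) :=
      Finset.prod_congr rfl fun x _ => hcoc a b x
    rw [h1, Finset.prod_mul_distrib]
    congr 1
    exact Equiv.prod_comp (MulAction.toPerm (a⁻¹ : FreeGroup α)) (fun x => U b x)
  let S : FreeGroup α →* Multiplicative ℤ :=
    MonoidHom.mk' (fun g => ∏ x : FreeGroup α ⧸ H, U g x) hSmul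
  have hSf : S = f := by
    apply FreeGroup.ext_hom
    intro j
    show (∏ x : FreeGroup α ⧸ H, U (FreeGroup.of j) x) = f (FreeGroup.of j)
    rw [hUof j, Finset.prod_eq_single x0]
    · simp
    · intro b _ hb; simp [hb]
    · intro h; exact absurd (Finset.mem_univ _) h
  -- powers expand as products over translates
  have hpow : ∀ (k : ℕ) (x : FreeGroup α ⧸ H),
      U (w ^ k) x = ∏ i ∈ Finset.range k, U w ((w ^ i)⁻¹ • x) := by
    intro k
    induction k with
    | zero => intro x; simp [hU1]
    | succ k ih =>
      intro x
      rw [pow_succ, hcoc (w ^ k) w x, ih x, Finset.prod_range_succ]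
  -- w^(m·t) ∈ H for all integers t
  have hzpow : ∀ t : ℤ, w ^ ((m : ℤ) * t) ∈ H := by
    intro t
    have := Subgroup.zpow_mem H hwm t
    rwa [← zpow_natCast, ← zpow_mul] at this
  -- the map i ↦ (w^i)⁻¹ • x0 from Fin m to the cosets
  have hmk : ∀ i : ℕ, ((w ^ i)⁻¹ • x0) = QuotientGroup.mk ((w ^ i)⁻¹ : FreeGroup α) := by
    intro i
    rw [hx0, MulAction.Quotient.smul_mk]
    simp [smul_eq_mul]
  have hinj : ∀ i j : ℕ, i < m → j < m →
      ((w ^ i)⁻¹ • x0) = ((w ^ j)⁻¹ • x0) → i = j := by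
    intro i j hi hj hij
    by_contra hne
    wlog hlt : i < j generalizing i j
    · exact this j i hj hi hij.symm (Ne.symm hne) (by omega)
    rw [hmk i, hmk j, QuotientGroup.eq] at hij
    have hmem : w ^ i * (w ^ j)⁻¹ ∈ H := by simpa using hij
    have hmem' : w ^ (j - i) ∈ H := by
      have h2 : w ^ (j - i) = (w ^ i * (w ^ j)⁻¹)⁻¹ := by
        rw [mul_inv_rev, inv_inv, eq_mul_inv_iff_mul_eq, ← pow_add]
        congr 1
        omega
      rw [h2]
      exact H.inv_mem hmem
    have := hmin (j - i) (by omega) hmem'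
    omega
  have hsurj : ∀ x : FreeGroup α ⧸ H, ∃ i : ℕ, i < m ∧ ((w ^ i)⁻¹ • x0) = x := by
    intro x
    obtain ⟨g, rfl⟩ := QuotientGroup.mk_surjective x
    obtain ⟨k, hk⟩ := htrans g⁻¹
    refine ⟨((-k) % (m : ℤ)).toNat, ?_, ?_⟩
    · have h1 : (0 : ℤ) < (m : ℤ) := by exact_mod_cast hm
      have h2 := Int.emod_lt_of_pos (-k) h1
      have h3 := Int.emod_nonneg (-k) (by omega : (m : ℤ) ≠ 0)
      omega
    · rw [hmk, QuotientGroup.eq]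
      have h1 : (0 : ℤ) < (m : ℤ) := by exact_mod_cast hm
      have h3 := Int.emod_nonneg (-k) (by omega : (m : ℤ) ≠ 0)
      have hcast : ((((-k) % (m : ℤ)).toNat : ℤ)) = (-k) % (m : ℤ) :=
        Int.toNat_of_nonneg h3
      have hH1 : w ^ (-k) * g ∈ H := by
        have := H.inv_mem hk
        simpa [mul_inv_rev, zpow_neg] using this
      have hdiv := Int.mul_ediv_add_emod (-k) (m : ℤ)
      have key : ((w ^ (((-k) % (m : ℤ)).toNat))⁻¹⁻¹ : FreeGroup α) * g
          = w ^ ((m : ℤ) * (-((-k) / (m : ℤ)))) * (w ^ (-k) * g) := by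
        have hexp : (-k) % (m : ℤ) = (m : ℤ) * -((-k) / (m : ℤ)) + -k := by
          rw [mul_neg]; linarith [hdiv]
        rw [inv_inv, ← mul_assoc, ← zpow_natCast w, ← zpow_add, hcast, hexp]
      rw [key]
      exact H.mul_mem (hzpow _) hH1
  -- final computation
  have hkey : U (w ^ m) x0 = f w := by
    have hbij : Function.Bijective (fun i : Fin m => ((w ^ (i : ℕ))⁻¹ • x0)) := by
      constructor
      · intro i j hij
        exact Fin.ext (hinj i j i.isLt j.isLt hij)
      · intro x
        obtain ⟨i, hi, hix⟩ := hsurj x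
        exact ⟨⟨i, hi⟩, hix⟩
    calc U (w ^ m) x0 = ∏ i ∈ Finset.range m, U w ((w ^ i)⁻¹ • x0) := hpow m x0
      _ = ∏ i : Fin m, U w ((w ^ (i : ℕ))⁻¹ • x0) :=
          (Fin.prod_univ_eq_prod_range (fun i => U w ((w ^ i)⁻¹ • x0)) m).symm
      _ = ∏ x : FreeGroup α ⧸ H, U w x := Fintype.prod_bijective _ hbij _ _ (fun i => rfl)
      _ = S w := rfl
      _ = f w := by rw [hSf]
  refine ⟨{ toFun := fun h => U (h : FreeGroup α) x0
            map_one' := hU1 x0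
            map_mul' := ?_ }, hkey⟩
  intro h₁ h₂
  show U ((h₁ : FreeGroup α) * (h₂ : FreeGroup α)) x0
      = U (h₁ : FreeGroup α) x0 * U (h₂ : FreeGroup α) x0
  rw [hcoc]
  congr 1
  have h2 : ((h₁ : FreeGroup α))⁻¹ • x0 = QuotientGroup.mk ((h₁ : FreeGroup α))⁻¹ := by
    rw [hx0, MulAction.Quotient.smul_mk]
    simp [smul_eq_mul]
  rw [h2, hx0]
  congr 1
  rw [QuotientGroup.eq]
  simpa using H.inv_mem h₁.2

theorem visible_power_of_transitive {n : ℕ} (hn : 2 ≤ n)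
    (H : Subgroup (FreeGroup (Fin n))) [H.FiniteIndex]
    (w : FreeGroup (Fin n)) (hw : IsVisibleElement w)
    (htrans : ∀ g : FreeGroup (Fin n), ∃ k : ℤ, g * w ^ k ∈ H)
    (m : ℕ) (hm : 0 < m) (hwm : w ^ m ∈ H)
    (hmin : ∀ j : ℕ, 0 < j → w ^ j ∈ H → m ≤ j) :
    IsVisibleElement (⟨w ^ m, hwm⟩ : H) := by
  obtain ⟨f, hf⟩ := hw
  obtain ⟨φ, hφ⟩ := exists_hom_of_transitive H w f htrans m hm hwm hmin
  exact ⟨φ, by rw [hφ, hf]⟩
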